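/- With B, σ, B* as above, the bilinear form on D(B) = B ⊗ B* defined by ⟨a ⊗ α, b ⊗ β⟩ = ⟨a^σ, β⟩⟨α, b^σ⟩ is symmetric and associative with respect to the double product; hence if σ is invertible, D(B) is a symmetric algebra. -/

import Mathlib

/-!
Statement 1: Let `B` be a bialgebra over a field `k` equipped with a `k`-linear map `σ`
that is both an algebra anti-homomorphism and a coalgebra anti-homomorphism, and let
`C` play the role of the (graded) dual bialgebra `B*`, i.e. `C` is a bialgebra equipped
with a pairing `p : B →ₗ C →ₗ k` for which the product of `C` is dual to the coproduct
of `B` and the coproduct of `C` is dual to the product of `B` (this is the structure of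
the graded dual of a graded bialgebra with finite dimensional pieces).  Then the product
on `D(B) = B ⊗ C` defined by
`(a ⊗ α)·(b ⊗ β) = Σ a₂ b₁ ⊗ β₂ α₁ ⟨σ a₁, β₁⟩ ⟨α₂, b₂⟩`
is associative.
-/

open TensorProduct

variable {k : Type*} [Field k]
variable {B C : Type*} [Ring B] [Ring C] [Bialgebra k B] [Bialgebra k C]

/-- The pairing extended to `B ⊗ C`. -/
noncomputable def pairT (p : B →ₗ[k] C →ₗ[k] k) : B ⊗[k] C →ₗ[k] k :=
  TensorProduct.lift p

/-- The pairing between `B ⊗ B` and `C ⊗ C` defined componentwise. -/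
noncomputable def pairT2 (p : B →ₗ[k] C →ₗ[k] k) :
    (B ⊗[k] B) ⊗[k] (C ⊗[k] C) →ₗ[k] k :=
  LinearMap.mul' k k ∘ₗ TensorProduct.map (pairT p) (pairT p) ∘ₗ
    (TensorProduct.tensorTensorTensorComm k B B C C).toLinearMap

/-- The multiplication map of the double `D(B) = B ⊗ B*`:
`(a ⊗ α)·(b ⊗ β) = Σ a₂ b₁ ⊗ β₂ α₁ ⟨a₁^σ, β₁⟩ ⟨α₂, b₂^σ⟩`. -/
noncomputable def doubleMul (σ : B →ₗ[k] B) (p : B →ₗ[k] C →ₗ[k] k) :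
    (B ⊗[k] C) ⊗[k] (B ⊗[k] C) →ₗ[k] B ⊗[k] C :=
  (TensorProduct.lid k (B ⊗[k] C)).toLinearMap
  ∘ₗ TensorProduct.map
      (pairT2 p ∘ₗ TensorProduct.map (TensorProduct.map σ σ) LinearMap.id)
      (TensorProduct.map (LinearMap.mul' k B) (LinearMap.mul' k C))
  ∘ₗ (TensorProduct.tensorTensorTensorComm k (B ⊗[k] B) (B ⊗[k] B)
        (C ⊗[k] C) (C ⊗[k] C)).toLinearMap
  ∘ₗ TensorProduct.map
      ((TensorProduct.tensorTensorTensorComm k B B B B).toLinearMap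
        ∘ₗ TensorProduct.map LinearMap.id (TensorProduct.comm k B B).toLinearMap)
      ((TensorProduct.tensorTensorTensorComm k C C C C).toLinearMap
        ∘ₗ TensorProduct.map LinearMap.id (TensorProduct.comm k C C).toLinearMap
        ∘ₗ (TensorProduct.comm k (C ⊗[k] C) (C ⊗[k] C)).toLinearMap)
  ∘ₗ (TensorProduct.tensorTensorTensorComm k (B ⊗[k] B) (C ⊗[k] C)
        (B ⊗[k] B) (C ⊗[k] C)).toLinearMap
  ∘ₗ TensorProduct.map
      (TensorProduct.map (Coalgebra.comul (R := k) (A := B))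
        (Coalgebra.comul (R := k) (A := C)))
      (TensorProduct.map (Coalgebra.comul (R := k) (A := B))
        (Coalgebra.comul (R := k) (A := C)))


/-- The bilinear form `⟨a ⊗ α, b ⊗ β⟩ = ⟨a^σ, β⟩⟨α, b^σ⟩` on the double `D(B) = B ⊗ B*`.
(Here `⟨α, b^σ⟩ = p (σ b) α`.) -/
noncomputable def doubleForm (σ : B →ₗ[k] B) (p : B →ₗ[k] C →ₗ[k] k) :
    (B ⊗[k] C) ⊗[k] (B ⊗[k] C) →ₗ[k] k :=
  LinearMap.mul' k k
  ∘ₗ TensorProduct.map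
      (pairT p ∘ₗ TensorProduct.map σ LinearMap.id)
      (pairT p ∘ₗ TensorProduct.map σ LinearMap.id ∘ₗ (TensorProduct.comm k C B).toLinearMap)
  ∘ₗ (TensorProduct.tensorTensorTensorComm k B C C B).toLinearMap
  ∘ₗ TensorProduct.map LinearMap.id (TensorProduct.comm k B C).toLinearMap


section Aux

lemma pairT_tmul (p : B →ₗ[k] C →ₗ[k] k) (a : B) (γ : C) :
    pairT p (a ⊗ₜ[k] γ) = p a γ := rfl

lemma pairT2_tmul (p : B →ₗ[k] C →ₗ[k] k) (a b : B) (γ δ : C) :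
    pairT2 p ((a ⊗ₜ[k] b) ⊗ₜ[k] (γ ⊗ₜ[k] δ)) = p a γ * p b δ := by
  simp [pairT2, pairT]

lemma doubleForm_tmul (σ : B →ₗ[k] B) (p : B →ₗ[k] C →ₗ[k] k) (a b : B) (α β : C) :
    doubleForm σ p ((a ⊗ₜ[k] α) ⊗ₜ[k] (b ⊗ₜ[k] β)) = p (σ a) β * p (σ b) α := by
  simp [doubleForm, pairT]

lemma doubleMul_tmul (σ : B →ₗ[k] B) (p : B →ₗ[k] C →ₗ[k] k)
    (a b : B) (α β : C) (Sa Sb : Finset (B × B)) (Sα Sβ : Finset (C × C))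
    (ha : Coalgebra.comul (R := k) a = ∑ i ∈ Sa, i.1 ⊗ₜ[k] i.2)
    (hb : Coalgebra.comul (R := k) b = ∑ j ∈ Sb, j.1 ⊗ₜ[k] j.2)
    (hα : Coalgebra.comul (R := k) α = ∑ u ∈ Sα, u.1 ⊗ₜ[k] u.2)
    (hβ : Coalgebra.comul (R := k) β = ∑ v ∈ Sβ, v.1 ⊗ₜ[k] v.2) :
    doubleMul σ p ((a ⊗ₜ[k] α) ⊗ₜ[k] (b ⊗ₜ[k] β))
      = ∑ i ∈ Sa, ∑ j ∈ Sb, ∑ u ∈ Sα, ∑ v ∈ Sβ,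
          (p (σ i.1) v.1 * p (σ j.2) u.2) • ((i.2 * j.1) ⊗ₜ[k] (v.2 * u.1)) := by
  simp only [doubleMul, LinearMap.comp_apply, TensorProduct.map_tmul, ha, hb, hα, hβ,
    LinearMap.id_apply]
  simp only [sum_tmul, tmul_sum, map_sum, LinearEquiv.coe_coe,
    tensorTensorTensorComm_tmul, comm_tmul, TensorProduct.map_tmul, LinearMap.comp_apply,
    LinearMap.id_apply, pairT2_tmul, LinearMap.mul'_apply, lid_tmul]
  conv_lhs => enter [2, v, 2, j]; rw [Finset.sum_comm]
  conv_lhs => enter [2, v]; rw [Finset.sum_comm]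
  rw [Finset.sum_comm]
  conv_lhs => enter [2, i]; rw [Finset.sum_comm]
  conv_lhs => enter [2, i, 2, j]; rw [Finset.sum_comm]

lemma exists_repr {ι : Type*} (bC : Module.Basis ι k C) (x : B ⊗[k] C) :
    ∃ f : ι →₀ B, x = f.sum fun s m => m ⊗ₜ[k] bC s := by
  classical
  induction x with
  | zero => exact ⟨0, by simp⟩
  | tmul m n =>
      refine ⟨(bC.repr n).mapRange (· • m) (by simp), ?_⟩
      rw [Finsupp.sum_mapRange_index (by simp)]
      conv_lhs => rw [← bC.linearCombination_repr n, Finsupp.linearCombination_apply]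
      rw [Finsupp.sum, Finsupp.sum, tmul_sum]
      exact Finset.sum_congr rfl fun s _ => (smul_tmul _ _ _).symm
  | add y z hy hz =>
      obtain ⟨f, rfl⟩ := hy; obtain ⟨g, rfl⟩ := hz
      refine ⟨f + g, ?_⟩
      rw [Finsupp.sum_add_index (by simp) (by intros; rw [add_tmul])]

end Aux

set_option maxHeartbeats 2000000 in
/-- The bilinear form `⟨a ⊗ α, b ⊗ β⟩ = ⟨a^σ, β⟩⟨α, b^σ⟩` on
`D(B) = B ⊗ B*` is symmetric and associative with respect to the double product;
hence, if `σ` is invertible (and the pairing between `B` and its dual `B* = C` is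
nondegenerate), `D(B)` is a symmetric algebra, i.e. the form is also nondegenerate. -/
theorem doubleForm_symmetric_associative
    (σ : B →ₗ[k] B)
    (hσmul : ∀ a b : B, σ (a * b) = σ b * σ a) (hσone : σ 1 = 1)
    (hσcomul : ∀ a : B,
      Coalgebra.comul (R := k) (σ a)
        = (TensorProduct.comm k B B) (TensorProduct.map σ σ (Coalgebra.comul (R := k) a)))
    (hσcounit : ∀ a : B, Coalgebra.counit (R := k) (σ a) = Coalgebra.counit (R := k) a)
    (p : B →ₗ[k] C →ₗ[k] k)
    (hpmulC : ∀ (a : B) (γ δ : C),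
      pairT p (a ⊗ₜ (γ * δ)) = pairT2 p ((Coalgebra.comul (R := k) a) ⊗ₜ (γ ⊗ₜ δ)))
    (hpmulB : ∀ (a b : B) (γ : C),
      pairT p ((a * b) ⊗ₜ γ) = pairT2 p ((a ⊗ₜ b) ⊗ₜ (Coalgebra.comul (R := k) γ)))
    (hpone : ∀ γ : C, pairT p ((1 : B) ⊗ₜ γ) = Coalgebra.counit (R := k) γ)
    (hpone' : ∀ a : B, pairT p (a ⊗ₜ (1 : C)) = Coalgebra.counit (R := k) a) :
    -- the form is symmetric
    (doubleForm σ p ∘ₗ (TensorProduct.comm k (B ⊗[k] C) (B ⊗[k] C)).toLinearMap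
        = doubleForm σ p)
    -- the form is associative with respect to the double product:
    -- `⟨x·y, z⟩ = ⟨x, y·z⟩`
    ∧ (doubleForm σ p ∘ₗ
          TensorProduct.map (doubleMul σ p) (LinearMap.id (M := B ⊗[k] C))
        = doubleForm σ p ∘ₗ
            TensorProduct.map (LinearMap.id (M := B ⊗[k] C)) (doubleMul σ p)
          ∘ₗ (TensorProduct.assoc k (B ⊗[k] C) (B ⊗[k] C) (B ⊗[k] C)).toLinearMap)
    -- if `σ` is invertible and the pairing is nondegenerate, the form is nondegenerate,
    -- so `D(B)` is a symmetric algebra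
    ∧ (Function.Bijective σ →
        (∀ b : B, (∀ γ : C, p b γ = 0) → b = 0) →
        (∀ γ : C, (∀ b : B, p b γ = 0) → γ = 0) →
        ∀ x : B ⊗[k] C, (∀ y : B ⊗[k] C, doubleForm σ p (x ⊗ₜ y) = 0) → x = 0) := by
  classical
  refine ⟨?_, ?_, ?_⟩
  · -- symmetry
    ext a α b β
    simp [doubleForm_tmul, mul_comm]
  · -- associativity
    ext a α b β c γ
    obtain ⟨Sa, ha⟩ := TensorProduct.exists_finset (Coalgebra.comul (R := k) a)
    obtain ⟨Sb, hb⟩ := TensorProduct.exists_finset (Coalgebra.comul (R := k) b)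
    obtain ⟨Sc, hc⟩ := TensorProduct.exists_finset (Coalgebra.comul (R := k) c)
    obtain ⟨Sα, hα⟩ := TensorProduct.exists_finset (Coalgebra.comul (R := k) α)
    obtain ⟨Sβ, hβ⟩ := TensorProduct.exists_finset (Coalgebra.comul (R := k) β)
    obtain ⟨Sγ, hγ⟩ := TensorProduct.exists_finset (Coalgebra.comul (R := k) γ)
    have key1 : ∀ x y : B, p (x * y) γ = ∑ w ∈ Sγ, p x w.1 * p y w.2 := by
      intro x y
      have h := hpmulB x y γ
      rw [hγ, tmul_sum, map_sum] at h
      simpa [pairT_tmul, pairT2_tmul] using h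
    have key4 : ∀ x y : B, p (x * y) α = ∑ u ∈ Sα, p x u.1 * p y u.2 := by
      intro x y
      have h := hpmulB x y α
      rw [hα, tmul_sum, map_sum] at h
      simpa [pairT_tmul, pairT2_tmul] using h
    have hσc : Coalgebra.comul (R := k) (σ c) = ∑ l ∈ Sc, (σ l.2) ⊗ₜ[k] (σ l.1) := by
      rw [hσcomul c, hc, map_sum, map_sum]
      simp [TensorProduct.map_tmul, comm_tmul]
    have hσa : Coalgebra.comul (R := k) (σ a) = ∑ i ∈ Sa, (σ i.2) ⊗ₜ[k] (σ i.1) := by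
      rw [hσcomul a, ha, map_sum, map_sum]
      simp [TensorProduct.map_tmul, comm_tmul]
    have key2 : ∀ δ ε : C, p (σ c) (δ * ε) = ∑ l ∈ Sc, p (σ l.2) δ * p (σ l.1) ε := by
      intro δ ε
      have h := hpmulC (σ c) δ ε
      rw [hσc, sum_tmul, map_sum] at h
      simpa [pairT_tmul, pairT2_tmul] using h
    have key3 : ∀ δ ε : C, p (σ a) (δ * ε) = ∑ i ∈ Sa, p (σ i.2) δ * p (σ i.1) ε := by
      intro δ ε
      have h := hpmulC (σ a) δ ε
      rw [hσa, sum_tmul, map_sum] at h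
      simpa [pairT_tmul, pairT2_tmul] using h
    simp only [TensorProduct.AlgebraTensorModule.curry_apply, TensorProduct.curry_apply,
      LinearMap.coe_restrictScalars, LinearMap.comp_apply, LinearEquiv.coe_coe,
      TensorProduct.map_tmul, LinearMap.id_apply, assoc_tmul]
    rw [doubleMul_tmul σ p a b α β Sa Sb Sα Sβ ha hb hα hβ,
        doubleMul_tmul σ p b c β γ Sb Sc Sβ Sγ hb hc hβ hγ]
    simp only [sum_tmul, tmul_sum, map_sum, smul_tmul', tmul_smul, map_smul,
      LinearMap.smul_apply, doubleForm_tmul, smul_eq_mul]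
    simp only [hσmul, key1, key2, key3, key4]
    simp only [Finset.mul_sum, Finset.sum_mul]
    conv_lhs => enter [2, i, 2, j, 2, u]; rw [Finset.sum_comm]
    conv_lhs => enter [2, i, 2, j]; rw [Finset.sum_comm]
    conv_rhs => enter [2, j, 2, l, 2, v]; rw [Finset.sum_comm]
    conv_rhs => enter [2, j, 2, l]; rw [Finset.sum_comm]
    conv_rhs => enter [2, j]; rw [Finset.sum_comm]
    conv_rhs => rw [Finset.sum_comm]
    conv_rhs => enter [2, i, 2, j, 2, l, 2, v]; rw [Finset.sum_comm]
    conv_rhs => enter [2, i, 2, j, 2, l]; rw [Finset.sum_comm]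
    conv_rhs => enter [2, x1, 2, x2]; rw [Finset.sum_comm]
    conv_rhs => enter [2, x1]; rw [Finset.sum_comm]
    conv_rhs => rw [Finset.sum_comm]
    conv_rhs => enter [2, x1]; rw [Finset.sum_comm]
    conv_rhs => enter [2, x1, 2, x2]; rw [Finset.sum_comm]
    refine Finset.sum_congr rfl fun i _ => Finset.sum_congr rfl fun j _ =>
      Finset.sum_congr rfl fun l _ => Finset.sum_congr rfl fun u _ =>
      Finset.sum_congr rfl fun v _ => Finset.sum_congr rfl fun w _ => by ring
  · -- nondegeneracy
    intro hbij hB hC x hx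
    set bC := Module.Basis.ofVectorSpace k C with hbC
    obtain ⟨f, rfl⟩ := exists_repr bC x
    set j : C →ₗ[k] B →ₗ[k] k := (p ∘ₗ σ).flip with hj
    have hjinj : LinearMap.ker j = ⊥ := by
      rw [LinearMap.ker_eq_bot']
      intro γ hγ0
      apply hC
      intro b'
      obtain ⟨b, rfl⟩ := hbij.2 b'
      have : j γ b = 0 := by rw [hγ0]; rfl
      simpa [hj] using this
    have li : LinearIndependent k (j ∘ bC) := bC.linearIndependent.map' j hjinj
    have hcoef : ∀ β : C, ∀ s ∈ f.support, p (σ (f s)) β = 0 := by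
      intro β
      have h0 : ∀ b : B,
          ∑ s ∈ f.support, p (σ (f s)) β * p (σ b) (bC s) = 0 := by
        intro b
        have h := hx (b ⊗ₜ[k] β)
        rw [Finsupp.sum, sum_tmul, map_sum] at h
        simpa [doubleForm_tmul] using h
      have hF : (∑ s ∈ f.support, (p (σ (f s)) β) • (j ∘ bC) s) = 0 := by
        apply LinearMap.ext
        intro b
        simpa [hj, Finset.sum_apply'] using h0 b
      exact linearIndependent_iff'.mp li f.support _ hF
    have hf : f = 0 := by
      ext s
      by_cases hs : s ∈ f.support
      · have h1 : σ (f s) = 0 := hB _ (fun β => hcoef β s hs)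
        have h2 : f s = 0 := hbij.1 (by rw [h1, map_zero])
        simpa using h2
      · simpa using Finsupp.notMem_support_iff.mp hs
    simp [hf]
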